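/- Let G ∈ ℝ^{m×d} be a matrix and let r be a positive integer with r < min(m, d). Let G = U Σ Vᵀ be a singular value decomposition of G, where U ∈ ℝ^{m×m} and V ∈ ℝ^{d×d} are orthogonal matrices and Σ ∈ ℝ^{m×d} is a rectangular diagonal matrix whose diagonal entries σ₁ ≥ σ₂ ≥ … ≥ σ_{min(m,d)} ≥ 0 are in nonincreasing order. Let V_r ∈ ℝ^{d×r} denote the matrix of the first r columns of V. Then for every A ∈ ℝ^{r×d} and every B ∈ ℝ^{m×r}, the Frobenius norm satisfies ‖G AᵀBᵀBA − G‖_F ≥ ‖G V_r V_rᵀ − G‖_F; that is, the optimization problem min_{A,B} ‖G AᵀBᵀBA − G‖_F attains its minimum at A = V_rᵀ and any B with BᵀB = I_{r×r}. -/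

import Mathlib

open Matrix

/-- The Frobenius norm of a real matrix: the square root of the sum of the
squares of all entries. -/
noncomputable def frobNorm {m n : ℕ} (M : Matrix (Fin m) (Fin n) ℝ) : ℝ :=
  Real.sqrt (∑ i, ∑ j, (M i j) ^ 2)

/-- The matrix formed by the first `r` columns of a square matrix. -/
def firstCols {n : ℕ} (r : ℕ) (h : r ≤ n) (M : Matrix (Fin n) (Fin n) ℝ) :
    Matrix (Fin n) (Fin r) ℝ :=
  Matrix.of fun i j => M i (Fin.castLE h j)

namespace FrobAux

open Finset

local notation "⟪" x ", " y "⟫" => @inner ℝ _ _ x y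

lemma key_exists {d r : ℕ} (g : Fin r → EuclideanSpace ℝ (Fin d))
    (w : Fin d → EuclideanSpace ℝ (Fin d))
    (hw : ∀ i, w i ∈ Submodule.span ℝ (Set.range g)) :
    ∃ q : Fin d → ℝ, (∀ i, 0 ≤ q i) ∧ (∀ i, q i ≤ 1) ∧ (∑ i, q i) ≤ (r : ℝ) ∧
      ∀ i, 1 - q i ≤ ∑ j, (w i j - if i = j then (1:ℝ) else 0) ^ 2 := by
  classical
  set S : Submodule ℝ (EuclideanSpace ℝ (Fin d)) := Submodule.span ℝ (Set.range g) with hS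
  have hfin : Module.finrank ℝ S ≤ r := by
    simpa [Set.finrank] using finrank_range_le_card g
  set r' := Module.finrank ℝ S with hr'
  let b : OrthonormalBasis (Fin r') ℝ S := stdOrthonormalBasis ℝ S
  let v : Fin r' → EuclideanSpace ℝ (Fin d) := fun k => (b k : EuclideanSpace ℝ (Fin d))
  have hvon : Orthonormal ℝ v := by
    have := b.orthonormal
    rw [orthonormal_iff_ite] at this ⊢
    intro i j
    simpa [v, Submodule.coe_inner] using this i j
  have hspan : ∀ i, w i ∈ Submodule.span ℝ (Set.range v) := by
    intro i
    have h2 : Submodule.span ℝ (Set.range v) = S := by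
      have h1 : Set.range v = (S.subtype) '' (Set.range (b : Fin r' → S)) := by
        ext x; simp [v, Set.range_comp]
      rw [h1, ← Submodule.map_span]
      rw [← b.coe_toBasis, b.toBasis.span_eq]
      simp
    rw [h2]; exact hw i
  let e : Fin d → EuclideanSpace ℝ (Fin d) := fun i => EuclideanSpace.single i (1:ℝ)
  have hv1 : ∀ k, ‖v k‖ = 1 := fun k => hvon.1 k
  refine ⟨fun i => ∑ k, ⟪v k, e i⟫ ^ 2, ?_, ?_, ?_, ?_⟩
  · intro i; positivity
  · intro i
    have hb := hvon.sum_inner_products_le (e i) (s := Finset.univ)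
    have hne : ‖e i‖ = 1 := by
      simp [e, EuclideanSpace.norm_single]
    rw [hne] at hb
    simpa [Real.norm_eq_abs, sq_abs] using hb
  · have h1 : ∀ k, (∑ i, ⟪v k, e i⟫ ^ 2) = 1 := by
      intro k
      have h0 : ∀ i, ⟪v k, e i⟫ = v k i := by
        intro i
        simp [e, EuclideanSpace.inner_single_right]
      simp_rw [h0]
      have h2 : ‖v k‖ ^ 2 = ∑ i, v k i ^ 2 := by
        rw [← real_inner_self_eq_norm_sq]
        simp only [PiLp.inner_apply, RCLike.inner_apply, conj_trivial, sq]
      rw [← h2, hv1, one_pow]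
    rw [Finset.sum_comm]
    simp_rw [h1]
    simp only [Finset.sum_const, card_univ, Fintype.card_fin, nsmul_eq_mul, mul_one]
    exact_mod_cast hfin
  · intro i
    obtain ⟨c, hc⟩ := (Submodule.mem_span_range_iff_exists_fun ℝ).mp (hspan i)
    set β : Fin r' → ℝ := fun k => ⟪v k, e i⟫ with hβ
    have hsq : (∑ j, (w i j - if i = j then (1:ℝ) else 0) ^ 2) = ‖w i - e i‖ ^ 2 := by
      rw [← real_inner_self_eq_norm_sq]
      rw [PiLp.inner_apply]
      refine Finset.sum_congr rfl fun j _ => ?_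
      have : (w i - e i) j = w i j - (if i = j then (1:ℝ) else 0) := by
        simp [e, EuclideanSpace.single_apply, eq_comm]
      rw [this]
      simp [sq]
    rw [hsq, norm_sub_sq_real]
    have hvkw : ∀ k, ⟪v k, w i⟫ = c k := by
      intro k; rw [← hc]; exact hvon.inner_right_fintype c k
    have hww : ‖w i‖ ^ 2 = ∑ k, c k ^ 2 := by
      rw [← real_inner_self_eq_norm_sq]
      nth_rewrite 1 [← hc]
      rw [sum_inner]
      refine Finset.sum_congr rfl fun k _ => ?_
      rw [real_inner_smul_left, hvkw k, sq]
    have hwe : ⟪w i, e i⟫ = ∑ k, c k * β k := by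
      rw [← hc, sum_inner]
      refine Finset.sum_congr rfl fun k _ => ?_
      rw [real_inner_smul_left]
    have hne : ‖e i‖ = 1 := by simp [e, EuclideanSpace.norm_single]
    rw [hww, hwe, hne]
    have hexp : (∑ k, (c k - β k) ^ 2)
        = (∑ k, c k ^ 2) - 2 * (∑ k, c k * β k) + ∑ k, β k ^ 2 := by
      rw [Finset.mul_sum, ← Finset.sum_sub_distrib, ← Finset.sum_add_distrib]
      exact Finset.sum_congr rfl fun k _ => by ring
    nlinarith [Finset.sum_nonneg (fun k (_ : k ∈ Finset.univ) => sq_nonneg (c k - β k))]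

lemma sum_mul_q_le {a q : ℕ → ℝ} {r n : ℕ} (hrn : r < n)
    (ha0 : ∀ i, i < n → 0 ≤ a i) (hamono : ∀ i j, i ≤ j → j < n → a j ≤ a i)
    (hq0 : ∀ i, 0 ≤ q i) (hq1 : ∀ i, q i ≤ 1)
    (hqs : ∑ i ∈ range n, q i ≤ (r : ℝ)) :
    ∑ i ∈ range n, a i * q i ≤ ∑ i ∈ range r, a i := by
  have hrn' : r ≤ n := hrn.le
  have hsplit : (∑ i ∈ range r, a i * q i) + (∑ i ∈ Ico r n, a i * q i)
      = ∑ i ∈ range n, a i * q i := Finset.sum_range_add_sum_Ico _ hrn'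
  have hsplitq : (∑ i ∈ range r, q i) + (∑ i ∈ Ico r n, q i)
      = ∑ i ∈ range n, q i := Finset.sum_range_add_sum_Ico _ hrn'
  have har0 : 0 ≤ a r := ha0 r hrn
  have h1 : ∑ i ∈ Ico r n, a i * q i ≤ a r * ∑ i ∈ Ico r n, q i := by
    rw [Finset.mul_sum]
    refine Finset.sum_le_sum fun i hi => ?_
    rw [Finset.mem_Ico] at hi
    exact mul_le_mul_of_nonneg_right (hamono r i hi.1 hi.2) (hq0 i)
  have h2 : ∑ i ∈ Ico r n, q i ≤ (r : ℝ) - ∑ i ∈ range r, q i := by linarith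
  have h3 : a r * ∑ i ∈ Ico r n, q i ≤ a r * ((r : ℝ) - ∑ i ∈ range r, q i) :=
    mul_le_mul_of_nonneg_left h2 har0
  have h4 : (∑ i ∈ range r, a i * q i) + a r * ((r : ℝ) - ∑ i ∈ range r, q i)
      ≤ ∑ i ∈ range r, a i := by
    have h5 : a r * ((r : ℝ) - ∑ i ∈ range r, q i)
        = ∑ i ∈ range r, a r * (1 - q i) := by
      simp only [mul_one_sub, Finset.sum_sub_distrib, Finset.sum_const, card_range,
        nsmul_eq_mul, ← Finset.mul_sum]
      ring
    rw [h5, ← Finset.sum_add_distrib]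
    refine Finset.sum_le_sum fun i hi => ?_
    rw [Finset.mem_range] at hi
    have hai : a r ≤ a i := hamono i r (le_of_lt hi) hrn
    nlinarith [hq0 i, hq1 i]
  linarith

lemma main_num {a q R : ℕ → ℝ} {r n : ℕ} (hrn : r < n)
    (ha0 : ∀ i, i < n → 0 ≤ a i) (hamono : ∀ i j, i ≤ j → j < n → a j ≤ a i)
    (hq0 : ∀ i, 0 ≤ q i) (hq1 : ∀ i, q i ≤ 1)
    (hqs : ∑ i ∈ range n, q i ≤ (r : ℝ))
    (hR : ∀ i, i < n → 1 - q i ≤ R i) :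
    ∑ i ∈ Ico r n, a i ≤ ∑ i ∈ range n, a i * R i := by
  have h1 : ∑ i ∈ range n, a i * (1 - q i) ≤ ∑ i ∈ range n, a i * R i := by
    refine Finset.sum_le_sum fun i hi => ?_
    rw [Finset.mem_range] at hi
    exact mul_le_mul_of_nonneg_left (hR i hi) (ha0 i hi)
  have h2 : ∑ i ∈ range n, a i * (1 - q i)
      = (∑ i ∈ range n, a i) - ∑ i ∈ range n, a i * q i := by
    rw [← Finset.sum_sub_distrib]
    exact Finset.sum_congr rfl fun i _ => by ring
  have h3 := sum_mul_q_le hrn ha0 hamono hq0 hq1 hqs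
  have h4 : (∑ i ∈ range r, a i) + (∑ i ∈ Ico r n, a i) = ∑ i ∈ range n, a i :=
    Finset.sum_range_add_sum_Ico _ hrn.le
  linarith

lemma sq_eq_trace {m d : ℕ} (M : Matrix (Fin m) (Fin d) ℝ) :
    ∑ i, ∑ j, M i j ^ 2 = (Mᵀ * M).trace := by
  rw [Matrix.trace, Finset.sum_comm]
  refine Finset.sum_congr rfl fun j _ => ?_
  simp [Matrix.diag, Matrix.mul_apply, sq]

lemma sq_conj {m d : ℕ} (U : Matrix (Fin m) (Fin m) ℝ) (V : Matrix (Fin d) (Fin d) ℝ)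
    (X : Matrix (Fin m) (Fin d) ℝ) (hU : Uᵀ * U = 1) (hV : Vᵀ * V = 1) :
    ∑ i, ∑ j, (U * X * Vᵀ) i j ^ 2 = ∑ i, ∑ j, X i j ^ 2 := by
  rw [sq_eq_trace, sq_eq_trace]
  have h1 : (U * X * Vᵀ)ᵀ * (U * X * Vᵀ) = V * (Xᵀ * X) * Vᵀ := by
    simp only [Matrix.transpose_mul, Matrix.transpose_transpose]
    calc Vᵀᵀ * (Xᵀ * Uᵀ) * (U * X * Vᵀ) = V * (Xᵀ * ((Uᵀ * U) * (X * Vᵀ))) := by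
          simp only [Matrix.transpose_transpose, Matrix.mul_assoc]
      _ = V * (Xᵀ * X) * Vᵀ := by rw [hU]; simp only [Matrix.one_mul, Matrix.mul_assoc]
  rw [h1]
  rw [Matrix.trace_mul_comm (V * (Xᵀ * X)) Vᵀ, ← Matrix.mul_assoc, hV, Matrix.one_mul]

def krow {d : ℕ} (K : Matrix (Fin d) (Fin d) ℝ) (i : ℕ) (j : Fin d) : ℝ :=
  if h : i < d then K ⟨i, h⟩ j else 0

lemma SK_apply {m d : ℕ} (S : Matrix (Fin m) (Fin d) ℝ) (σ : ℕ → ℝ)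
    (hSdiag : ∀ (i : Fin m) (j : Fin d), (i : ℕ) = (j : ℕ) → S i j = σ (i : ℕ))
    (hSoff : ∀ (i : Fin m) (j : Fin d), (i : ℕ) ≠ (j : ℕ) → S i j = 0)
    (K : Matrix (Fin d) (Fin d) ℝ) (i : Fin m) (j : Fin d) :
    (S * K) i j = σ (i : ℕ) * krow K (i : ℕ) j := by
  rw [Matrix.mul_apply, krow]
  by_cases h : (i : ℕ) < d
  · rw [dif_pos h]
    rw [Finset.sum_eq_single (⟨(i : ℕ), h⟩ : Fin d)]
    · rw [hSdiag i ⟨(i : ℕ), h⟩ rfl]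
    · intro k _ hk
      rw [hSoff i k (fun hik => hk (by exact Fin.ext hik.symm)), zero_mul]
    · intro hk; exact absurd (Finset.mem_univ _) hk
  · rw [dif_neg h, mul_zero]
    refine Finset.sum_eq_zero fun k _ => ?_
    rw [hSoff i k (fun hik => h (hik ▸ k.isLt)), zero_mul]

lemma sq_SK {m d : ℕ} (S : Matrix (Fin m) (Fin d) ℝ) (σ : ℕ → ℝ)
    (hSdiag : ∀ (i : Fin m) (j : Fin d), (i : ℕ) = (j : ℕ) → S i j = σ (i : ℕ))
    (hSoff : ∀ (i : Fin m) (j : Fin d), (i : ℕ) ≠ (j : ℕ) → S i j = 0)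
    (K : Matrix (Fin d) (Fin d) ℝ) :
    ∑ i, ∑ j, ((S * K) i j) ^ 2
      = ∑ i ∈ range (min m d), σ i ^ 2 * ∑ j, (krow K i j) ^ 2 := by
  have h1 : ∀ i : Fin m, ∑ j, ((S * K) i j) ^ 2 = σ (i:ℕ) ^ 2 * ∑ j, (krow K (i:ℕ) j) ^ 2 := by
    intro i
    rw [Finset.mul_sum]
    refine Finset.sum_congr rfl fun j _ => ?_
    rw [SK_apply S σ hSdiag hSoff K i j, mul_pow]
  calc ∑ i, ∑ j, ((S * K) i j) ^ 2
      = ∑ i : Fin m, σ (i:ℕ) ^ 2 * ∑ j, (krow K (i:ℕ) j) ^ 2 :=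
        Finset.sum_congr rfl fun i _ => h1 i
    _ = ∑ i ∈ range m, σ i ^ 2 * ∑ j, (krow K i j) ^ 2 :=
        Fin.sum_univ_eq_sum_range (fun i => σ i ^ 2 * ∑ j, (krow K i j) ^ 2) m
    _ = ∑ i ∈ range (min m d), σ i ^ 2 * ∑ j, (krow K i j) ^ 2 := by
        refine (Finset.sum_subset (Finset.range_subset_range.2 (min_le_left m d)) ?_).symm
        intro i hi hni
        rw [Finset.mem_range] at hi
        rw [Finset.mem_range, not_lt] at hni
        have hd : ¬ i < d := by omega
        have h0 : ∀ j, krow K i j = 0 := fun j => dif_neg hd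
        simp [h0]

lemma conj_firstCols {d r : ℕ} (h : r ≤ d) (V : Matrix (Fin d) (Fin d) ℝ) (hV : Vᵀ * V = 1) :
    Vᵀ * (firstCols r h V * (firstCols r h V)ᵀ) * V
      = Matrix.of (fun (i j : Fin d) => if i = j ∧ (i : ℕ) < r then (1:ℝ) else 0) := by
  have key : Vᵀ * firstCols r h V
      = Matrix.of (fun (i : Fin d) (a : Fin r) => if (i : ℕ) = (a : ℕ) then (1:ℝ) else 0) := by
    ext i a
    have h2 : (Vᵀ * V) i (Fin.castLE h a) = (1 : Matrix (Fin d) (Fin d) ℝ) i (Fin.castLE h a) := by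
      rw [hV]
    rw [Matrix.mul_apply] at h2
    rw [Matrix.mul_apply]
    simp only [Matrix.transpose_apply, firstCols, Matrix.of_apply] at h2 ⊢
    rw [h2, Matrix.one_apply]
    by_cases hia : (i : ℕ) = (a : ℕ)
    · rw [if_pos hia, if_pos (Fin.ext (by simpa using hia))]
    · rw [if_neg hia, if_neg (fun he => hia (by simpa using congrArg Fin.val he))]
  have hrw : Vᵀ * (firstCols r h V * (firstCols r h V)ᵀ) * V
      = (Vᵀ * firstCols r h V) * (Vᵀ * firstCols r h V)ᵀ := by
    rw [Matrix.transpose_mul, Matrix.transpose_transpose]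
    simp only [Matrix.mul_assoc]
  rw [hrw, key]
  ext i j
  rw [Matrix.mul_apply]
  simp only [Matrix.of_apply, Matrix.transpose_apply]
  have hterm : ∀ a : Fin r,
      (if (i : ℕ) = (a : ℕ) then (1:ℝ) else 0) * (if (j : ℕ) = (a : ℕ) then (1:ℝ) else 0)
        = if (i : ℕ) = (a : ℕ) ∧ (j : ℕ) = (a : ℕ) then (1:ℝ) else 0 := by
    intro a; split_ifs with h1 h2 h3 <;> simp_all
  rw [Finset.sum_congr rfl fun a _ => hterm a]
  by_cases hij : i = j ∧ (i : ℕ) < r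
  · obtain ⟨he, hlt⟩ := hij
    subst he
    rw [if_pos ⟨rfl, hlt⟩]
    rw [Finset.sum_eq_single (⟨(i : ℕ), hlt⟩ : Fin r)]
    · simp
    · intro a _ ha
      have hna : ¬ ((i : ℕ) = (a : ℕ) ∧ (i : ℕ) = (a : ℕ)) := by
        intro hh; exact ha (Fin.ext hh.1.symm)
      rw [if_neg hna]
    · intro hk; exact absurd (Finset.mem_univ _) hk
  · rw [if_neg hij]
    refine Finset.sum_eq_zero fun a _ => ?_
    refine if_neg fun hh => hij ?_
    exact ⟨Fin.ext (hh.1.trans hh.2.symm), hh.1 ▸ a.isLt⟩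

lemma rows_W_mem_span {m d r : ℕ} (A : Matrix (Fin r) (Fin d) ℝ) (B : Matrix (Fin m) (Fin r) ℝ)
    (V : Matrix (Fin d) (Fin d) ℝ) (i : Fin d) :
    (WithLp.toLp 2 (fun j => (Vᵀ * (Aᵀ * Bᵀ * B * A) * V) i j) : EuclideanSpace ℝ (Fin d)) ∈
      Submodule.span ℝ (Set.range (fun (a : Fin r) =>
        (WithLp.toLp 2 (fun j => (Bᵀ * B * A * V) a j) : EuclideanSpace ℝ (Fin d)))) := by
  rw [Submodule.mem_span_range_iff_exists_fun]
  refine ⟨fun a => (A * V) a i, ?_⟩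
  ext j
  have hW : Vᵀ * (Aᵀ * Bᵀ * B * A) * V = (A * V)ᵀ * (Bᵀ * B * A * V) := by
    simp only [Matrix.transpose_mul, Matrix.mul_assoc]
  have h0 : ((∑ a, (A * V) a i • (WithLp.toLp 2 (fun j => (Bᵀ * B * A * V) a j) : EuclideanSpace ℝ (Fin d))) j)
      = ∑ a, (A * V) a i * (Bᵀ * B * A * V) a j := by
    rw [WithLp.ofLp_sum, Finset.sum_apply]
    rfl
  rw [h0, WithLp.ofLp_toLp, hW, Matrix.mul_apply]
  simp [Matrix.transpose_apply]

end FrobAux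

open FrobAux Finset

/-- Let `G = U Σ Vᵀ` be an SVD of `G ∈ ℝ^{m×d}` with nonincreasing nonnegative
singular values, `0 < r < min m d`, and `V_r` the first `r` columns of `V`.
Then for all `A ∈ ℝ^{r×d}`, `B ∈ ℝ^{m×r}`,
`‖G AᵀBᵀBA − G‖_F ≥ ‖G V_r V_rᵀ − G‖_F`. -/
theorem frobNorm_sub_ge_of_svd {m d r : ℕ} (hr : 0 < r) (hrmd : r < min m d)
    (G : Matrix (Fin m) (Fin d) ℝ)
    (U : Matrix (Fin m) (Fin m) ℝ) (V : Matrix (Fin d) (Fin d) ℝ)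
    (S : Matrix (Fin m) (Fin d) ℝ) (σ : ℕ → ℝ)
    (hU : Uᵀ * U = 1) (hV : Vᵀ * V = 1)
    (hSdiag : ∀ (i : Fin m) (j : Fin d), (i : ℕ) = (j : ℕ) → S i j = σ (i : ℕ))
    (hSoff : ∀ (i : Fin m) (j : Fin d), (i : ℕ) ≠ (j : ℕ) → S i j = 0)
    (hσnonneg : ∀ i, i < min m d → 0 ≤ σ i)
    (hσanti : ∀ i j, i ≤ j → j < min m d → σ j ≤ σ i)
    (hsvd : G = U * S * Vᵀ)
    (A : Matrix (Fin r) (Fin d) ℝ) (B : Matrix (Fin m) (Fin r) ℝ) :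
    frobNorm (G * Aᵀ * Bᵀ * B * A - G) ≥
      frobNorm (G * firstCols r (le_of_lt (lt_of_lt_of_le hrmd (min_le_right m d))) V *
        (firstCols r (le_of_lt (lt_of_lt_of_le hrmd (min_le_right m d))) V)ᵀ - G) := by
  classical
  set n := min m d with hn
  have hrd : r ≤ d := le_of_lt (lt_of_lt_of_le hrmd (min_le_right m d))
  have hVVt : V * Vᵀ = 1 := mul_eq_one_comm.mp hV
  set Vr := firstCols r hrd V with hVr
  -- reduction: G*N - G = U * (S * (Vᵀ*N*V - 1)) * Vᵀ
  have hred : ∀ N : Matrix (Fin d) (Fin d) ℝ,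
      G * N - G = U * (S * (Vᵀ * N * V - 1)) * Vᵀ := by
    intro N
    rw [hsvd]
    simp only [Matrix.mul_sub, Matrix.sub_mul, Matrix.mul_one]
    congr 1
    calc U * S * Vᵀ * N = U * (S * (Vᵀ * N * (V * Vᵀ))) := by
          rw [hVVt, Matrix.mul_one]; simp only [Matrix.mul_assoc]
      _ = U * (S * (Vᵀ * N * V)) * Vᵀ := by simp only [Matrix.mul_assoc]
  have hsq : ∀ N : Matrix (Fin d) (Fin d) ℝ,
      ∑ i, ∑ j, ((G * N - G) i j) ^ 2
        = ∑ i ∈ range n, σ i ^ 2 * ∑ j, (krow (Vᵀ * N * V - 1) i j) ^ 2 := by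
    intro N
    rw [hred N, sq_conj U V _ hU hV, sq_SK S σ hSdiag hSoff]
  -- LHS matrix in form G * N - G
  have hLHSm : G * Aᵀ * Bᵀ * B * A - G = G * (Aᵀ * Bᵀ * B * A) - G := by
    simp only [Matrix.mul_assoc]
  -- RHS computation
  have hRconj := conj_firstCols hrd V hV
  have hRrow : ∀ i, i < n →
      (∑ j, (krow (Vᵀ * (Vr * Vrᵀ) * V - 1) i j) ^ 2) = if i < r then 0 else 1 := by
    intro i hin
    have hid : i < d := lt_of_lt_of_le hin (min_le_right m d)
    have hkr : ∀ j, krow (Vᵀ * (Vr * Vrᵀ) * V - 1) i j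
        = (if (⟨i, hid⟩ : Fin d) = j ∧ i < r then (1:ℝ) else 0)
            - (if (⟨i, hid⟩ : Fin d) = j then (1:ℝ) else 0) := by
      intro j
      rw [krow, dif_pos hid, Matrix.sub_apply, hVr, hRconj, Matrix.one_apply]
      simp only [Matrix.of_apply]
    rw [Finset.sum_congr rfl fun j _ => by rw [hkr j]]
    rw [Finset.sum_eq_single (⟨i, hid⟩ : Fin d)]
    · by_cases hir : i < r
      · rw [if_pos ⟨rfl, hir⟩, if_pos rfl, if_pos hir]; ring
      · rw [if_neg (fun hh => hir hh.2), if_pos rfl, if_neg hir]; ring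
    · intro j _ hj
      rw [if_neg (fun hh => hj hh.1.symm), if_neg (fun hh => hj hh.symm)]
      ring
    · intro hk; exact absurd (Finset.mem_univ _) hk
  have hRHSsum : ∑ i ∈ range n, σ i ^ 2 * ∑ j, (krow (Vᵀ * (Vr * Vrᵀ) * V - 1) i j) ^ 2
      = ∑ i ∈ Ico r n, σ i ^ 2 := by
    rw [Finset.sum_congr rfl fun i hi => by
      rw [hRrow i (Finset.mem_range.mp hi)]]
    rw [← Finset.sum_range_add_sum_Ico (fun i => σ i ^ 2 * if i < r then (0:ℝ) else 1)
      (le_of_lt hrmd)]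
    have e1 : ∑ i ∈ range r, σ i ^ 2 * (if i < r then (0:ℝ) else 1) = 0 := by
      refine Finset.sum_eq_zero fun i hi => ?_
      rw [if_pos (Finset.mem_range.mp hi), mul_zero]
    have e2 : ∑ i ∈ Ico r n, σ i ^ 2 * (if i < r then (0:ℝ) else 1)
        = ∑ i ∈ Ico r n, σ i ^ 2 := by
      refine Finset.sum_congr rfl fun i hi => ?_
      rw [if_neg (not_lt.mpr (Finset.mem_Ico.mp hi).1), mul_one]
    rw [e1, e2, zero_add]
  -- LHS lower bound via key_exists
  set W := Vᵀ * (Aᵀ * Bᵀ * B * A) * V with hW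
  obtain ⟨q, hq0, hq1, hqs, hqR⟩ := key_exists
    (fun (a : Fin r) => (WithLp.toLp 2 (fun j => (Bᵀ * B * A * V) a j) : EuclideanSpace ℝ (Fin d)))
    (fun i => (WithLp.toLp 2 (fun j => W i j) : EuclideanSpace ℝ (Fin d)))
    (fun i => rows_W_mem_span A B V i)
  set q' : ℕ → ℝ := fun i => if h : i < d then q ⟨i, h⟩ else 0 with hq'
  have hq'0 : ∀ i, 0 ≤ q' i := by
    intro i; rw [hq']; dsimp only
    split
    · exact hq0 _
    · exact le_refl 0
  have hq'1 : ∀ i, q' i ≤ 1 := by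
    intro i; rw [hq']; dsimp only
    split
    · exact hq1 _
    · exact zero_le_one
  have hq'sum : ∑ i ∈ range n, q' i ≤ (r : ℝ) := by
    have hsub : ∑ i ∈ range n, q' i ≤ ∑ i ∈ range d, q' i := by
      refine Finset.sum_le_sum_of_subset_of_nonneg
        (Finset.range_subset_range.2 (min_le_right m d)) (fun i _ _ => hq'0 i)
    have heq : ∑ i ∈ range d, q' i = ∑ i : Fin d, q i := by
      rw [← Fin.sum_univ_eq_sum_range (fun i => q' i) d]
      refine Finset.sum_congr rfl fun i _ => ?_
      rw [hq']; dsimp only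
      rw [dif_pos i.isLt]
    calc ∑ i ∈ range n, q' i ≤ ∑ i ∈ range d, q' i := hsub
      _ = ∑ i : Fin d, q i := heq
      _ ≤ (r : ℝ) := hqs
  have hRbound : ∀ i, i < n → 1 - q' i ≤ ∑ j, (krow (W - 1) i j) ^ 2 := by
    intro i hin
    have hid : i < d := lt_of_lt_of_le hin (min_le_right m d)
    have hkr : ∀ j, krow (W - 1) i j
        = W ⟨i, hid⟩ j - (if (⟨i, hid⟩ : Fin d) = j then (1:ℝ) else 0) := by
      intro j
      rw [krow, dif_pos hid, Matrix.sub_apply, Matrix.one_apply]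
    have := hqR ⟨i, hid⟩
    rw [hq']; dsimp only
    rw [dif_pos hid]
    calc 1 - q ⟨i, hid⟩ ≤ ∑ j, (W ⟨i, hid⟩ j - if (⟨i, hid⟩ : Fin d) = j then (1:ℝ) else 0) ^ 2 :=
          this
      _ = ∑ j, (krow (W - 1) i j) ^ 2 := by
          refine Finset.sum_congr rfl fun j _ => ?_
          rw [hkr j]
  -- numeric conclusion
  have hnum : ∑ i ∈ Ico r n, σ i ^ 2 ≤ ∑ i ∈ range n, σ i ^ 2 * ∑ j, (krow (W - 1) i j) ^ 2 := by
    refine main_num hrmd (fun i _ => sq_nonneg (σ i)) ?_ hq'0 hq'1 hq'sum hRbound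
    intro i j hij hjn
    have h0 : 0 ≤ σ j := hσnonneg j hjn
    have h1 : σ j ≤ σ i := hσanti i j hij hjn
    nlinarith
  -- assemble
  rw [ge_iff_le, frobNorm, frobNorm]
  refine Real.sqrt_le_sqrt ?_
  have eL : G * Aᵀ * Bᵀ * B * A - G = G * (Aᵀ * Bᵀ * B * A) - G := hLHSm
  calc ∑ i, ∑ j, ((G * Vr * Vrᵀ - G) i j) ^ 2
      = ∑ i, ∑ j, ((G * (Vr * Vrᵀ) - G) i j) ^ 2 := by
        rw [Matrix.mul_assoc]
    _ = ∑ i ∈ range n, σ i ^ 2 * ∑ j, (krow (Vᵀ * (Vr * Vrᵀ) * V - 1) i j) ^ 2 :=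
        hsq (Vr * Vrᵀ)
    _ = ∑ i ∈ Ico r n, σ i ^ 2 := hRHSsum
    _ ≤ ∑ i ∈ range n, σ i ^ 2 * ∑ j, (krow (W - 1) i j) ^ 2 := hnum
    _ = ∑ i, ∑ j, ((G * (Aᵀ * Bᵀ * B * A) - G) i j) ^ 2 := (hsq (Aᵀ * Bᵀ * B * A)).symm
    _ = ∑ i, ∑ j, ((G * Aᵀ * Bᵀ * B * A - G) i j) ^ 2 := by rw [← eL]
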